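/- For the entropy production rate Σ̇(t) = [σ₀E₀² sin(ω₀t)/(1+(ω₀τ)²)]·[ω₀τ e^{-t/τ} − ω₀τ cos(ω₀t) + sin(ω₀t)] with σ₀, E₀, ω₀, τ > 0, there exists a time t > 0 at which Σ̇(t) < 0. -/

import Mathlib

open Real

theorem entropy_production_rate_negative
    (σ₀ E₀ ω₀ τ : ℝ) (hσ : 0 < σ₀) (hE : 0 < E₀) (hω : 0 < ω₀) (hτ : 0 < τ) :
    ∃ t : ℝ, 0 < t ∧
      (σ₀ * E₀ ^ 2 * Real.sin (ω₀ * t) / (1 + (ω₀ * τ) ^ 2)) *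
        (ω₀ * τ * Real.exp (-t / τ) - ω₀ * τ * Real.cos (ω₀ * t) + Real.sin (ω₀ * t)) < 0 := by
  set a := ω₀ * τ with ha_def
  have ha : 0 < a := mul_pos hω hτ
  set ε : ℝ := min 1 (a / 8) with hε_def
  have hε_pos : 0 < ε := lt_min one_pos (by linarith)
  have hε_le1 : ε ≤ 1 := min_le_left _ _
  have hε_le : ε ≤ a / 8 := min_le_right _ _
  set k : ℕ := ⌈a⌉₊ with hk_def
  have hk_ge : (a : ℝ) ≤ k := Nat.le_ceil a
  set t : ℝ := (2 * π * k + ε) / ω₀ with ht_def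
  have hπ : (3 : ℝ) < π := by
    have := Real.pi_gt_three
    linarith
  have ht_pos : 0 < t := by
    apply div_pos _ hω
    have : (0:ℝ) ≤ 2 * π * k := by positivity
    linarith
  have hωt : ω₀ * t = ε + k * (2 * π) := by
    rw [ht_def]
    field_simp
    ring
  refine ⟨t, ht_pos, ?_⟩
  have hsin : Real.sin (ω₀ * t) = Real.sin ε := by
    rw [hωt, Real.sin_add_nat_mul_two_pi]
  have hcos : Real.cos (ω₀ * t) = Real.cos ε := by
    rw [hωt, Real.cos_add_nat_mul_two_pi]
  have hsin_pos : 0 < Real.sin ε :=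
    Real.sin_pos_of_pos_of_lt_pi hε_pos (by linarith)
  -- t ≥ 2π τ ≥ 4τ
  have ht_ge : 4 * τ ≤ t := by
    have h1 : 2 * π * a ≤ 2 * π * k := by
      have : (0:ℝ) < 2 * π := by linarith
      nlinarith
    have h2 : 2 * π * a + ε ≤ 2 * π * k + ε := by linarith
    have h3 : (2 * π * a) / ω₀ ≤ t := by
      rw [ht_def]
      gcongr
      linarith
    have h4 : (2 * π * a) / ω₀ = 2 * π * τ := by
      rw [ha_def]; field_simp
    nlinarith
  have hexp : Real.exp (-t / τ) ≤ 1 / 4 := by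
    have htτ : (4:ℝ) ≤ t / τ := by
      rw [le_div_iff₀ hτ]; linarith
    have h1 : t / τ ≤ Real.exp (t / τ) := by
      have := Real.add_one_le_exp (t / τ)
      linarith
    have h2 : (4:ℝ) ≤ Real.exp (t / τ) := le_trans htτ h1
    have h3 : Real.exp (-t / τ) = (Real.exp (t / τ))⁻¹ := by
      rw [← Real.exp_neg]; ring_nf
    rw [h3]
    rw [inv_le_iff_one_le_mul₀ (by linarith)]
    nlinarith
  have hcos_ge : (1:ℝ)/2 ≤ Real.cos ε := by
    have := Real.one_sub_sq_div_two_le_cos (x := ε)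
    nlinarith
  have hsin_le : Real.sin ε ≤ ε := Real.sin_le hε_pos.le
  have hbracket : ω₀ * τ * Real.exp (-t / τ) - ω₀ * τ * Real.cos (ω₀ * t) + Real.sin (ω₀ * t) < 0 := by
    rw [hcos, hsin, ← ha_def]
    nlinarith
  apply mul_neg_of_pos_of_neg _ hbracket
  rw [hsin]
  positivity
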